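/- For the LMMSE coefficient c(ρ) = ρτκ / (ρτ∑_{k'∈P} κ_{k'} + D) with κ ≤ ∑_{k'∈P} κ_{k'} (pilot contamination, |P| ≥ 2 with positive κ_{k'}), the NMSE 1 − c(ρ) is strictly decreasing in ρ but bounded below by the strictly positive limit 1 − κ/∑_{k'∈P} κ_{k'} as ρ → ∞; i.e., pilot contamination prevents the NMSE from vanishing as transmit power grows. -/

import Mathlib

open Filter

/-- For the LMMSE coefficient
`c(ρ) = ρτκ / (ρτ ∑_{k'∈P} κ_{k'} + D)` with pilot contamination (`|P| ≥ 2`, all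
`κ_{k'} > 0`, `κ = κ_{k₀}` for some `k₀ ∈ P`), the NMSE `1 − c(ρ)` is strictly
decreasing in `ρ` but bounded below by the strictly positive limit
`1 − κ / ∑_{k'∈P} κ_{k'}` as `ρ → ∞`: pilot contamination prevents the NMSE from
vanishing as the transmit power grows. -/
theorem pilot_contamination_nmse_floor {ι : Type*} [DecidableEq ι]
    (P : Finset ι) (κf : ι → ℝ) (k₀ : ι) (hk₀ : k₀ ∈ P) (hP : 2 ≤ P.card)
    (hκpos : ∀ k' ∈ P, 0 < κf k') (τ D : ℝ) (hτ : 0 < τ) (hD : 0 < D) :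
    StrictAntiOn
        (fun ρ : ℝ => 1 - ρ * τ * κf k₀ / (ρ * τ * (∑ k' ∈ P, κf k') + D))
        (Set.Ioi 0) ∧
      (∀ ρ : ℝ, 0 < ρ →
        1 - κf k₀ / (∑ k' ∈ P, κf k')
          < 1 - ρ * τ * κf k₀ / (ρ * τ * (∑ k' ∈ P, κf k') + D)) ∧
      Tendsto (fun ρ : ℝ => 1 - ρ * τ * κf k₀ / (ρ * τ * (∑ k' ∈ P, κf k') + D))
        atTop (nhds (1 - κf k₀ / (∑ k' ∈ P, κf k'))) ∧
      0 < 1 - κf k₀ / (∑ k' ∈ P, κf k') := by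
  set S : ℝ := ∑ k' ∈ P, κf k' with hS
  have hSpos : 0 < S := Finset.sum_pos (fun i hi => hκpos i hi) ⟨k₀, hk₀⟩
  have hκ0 : 0 < κf k₀ := hκpos k₀ hk₀
  have hκltS : κf k₀ < S := by
    have herase : P.erase k₀ |>.Nonempty := by
      rw [← Finset.card_pos, Finset.card_erase_of_mem hk₀]; omega
    have hpos : 0 < ∑ k' ∈ P.erase k₀, κf k' :=
      Finset.sum_pos (fun i hi => hκpos i (Finset.mem_of_mem_erase hi)) herase
    have := Finset.add_sum_erase P κf hk₀
    linarith [this]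
  have hden : ∀ ρ : ℝ, 0 < ρ → 0 < ρ * τ * S + D := by
    intro ρ hρ
    have : 0 < ρ * τ * S := by positivity
    linarith
  refine ⟨?_, ?_, ?_, ?_⟩
  · intro a ha b hb hab
    simp only [Set.mem_Ioi] at ha hb
    have hda := hden a ha
    have hdb := hden b hb
    have key : b * τ * κf k₀ / (b * τ * S + D) > a * τ * κf k₀ / (a * τ * S + D) := by
      rw [gt_iff_lt, div_lt_div_iff₀ hda hdb]
      have : a * D < b * D := by nlinarith
      nlinarith [mul_pos hτ hκ0]
    linarith
  · intro ρ hρ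
    have hdρ := hden ρ hρ
    have : ρ * τ * κf k₀ / (ρ * τ * S + D) < κf k₀ / S := by
      rw [div_lt_div_iff₀ hdρ hSpos]
      nlinarith
    linarith
  · have h1 : Tendsto (fun ρ : ℝ => τ * S + D / ρ) atTop (nhds (τ * S)) := by
      have := tendsto_const_div_atTop_nhds_zero_nat (𝕜 := ℝ)
      have h2 : Tendsto (fun ρ : ℝ => D / ρ) atTop (nhds 0) :=
        tendsto_const_nhds.div_atTop tendsto_id
      simpa using tendsto_const_nhds.add h2
    have h3 : Tendsto (fun ρ : ℝ => τ * κf k₀ / (τ * S + D / ρ)) atTop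
        (nhds (τ * κf k₀ / (τ * S))) :=
      tendsto_const_nhds.div h1 (by positivity)
    have heq : (fun ρ : ℝ => 1 - ρ * τ * κf k₀ / (ρ * τ * S + D)) =ᶠ[atTop]
        (fun ρ : ℝ => 1 - τ * κf k₀ / (τ * S + D / ρ)) := by
      filter_upwards [eventually_gt_atTop 0] with ρ hρ
      congr 1
      rw [div_eq_div_iff (hden ρ hρ).ne' (by positivity : (τ * S + D / ρ) ≠ 0)]
      field_simp
    have hval : τ * κf k₀ / (τ * S) = κf k₀ / S := by
      rw [mul_div_mul_left _ _ (ne_of_gt hτ)]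
    rw [show (1 : ℝ) - κf k₀ / S = 1 - τ * κf k₀ / (τ * S) by rw [hval]]
    exact Tendsto.congr' heq.symm (tendsto_const_nhds.sub h3)
  · have : κf k₀ / S < 1 := (div_lt_one hSpos).mpr hκltS
    linarith
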